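/- If G is a graph with degeneracy d ≥ 1, then its two-color Ramsey number satisfies r(G) ≥ 2^{d/2}. -/

import Mathlib

open Finset

/-- A two-coloring `col` of the edges of `K_N` contains a monochromatic copy of `G` in color `c`. -/
def HasMonoCopy {V : Type*} {N : ℕ} (G : SimpleGraph V) (col : Sym2 (Fin N) → Bool)
    (c : Bool) : Prop :=
  ∃ f : V → Fin N, Function.Injective f ∧ ∀ u v : V, G.Adj u v → col s(f u, f v) = c

/-- The two-color Ramsey number of a graph `G`. -/
noncomputable def ramsey {V : Type*} (G : SimpleGraph V) : ℕ :=
  sInf {N | ∀ col : Sym2 (Fin N) → Bool, ∃ c : Bool, HasMonoCopy G col c}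

/-- `q`-coloring version of containing a monochromatic copy. -/
def HasMonoCopyMulti {V : Type*} {N q : ℕ} (G : SimpleGraph V) (col : Sym2 (Fin N) → Fin q)
    (c : Fin q) : Prop :=
  ∃ f : V → Fin N, Function.Injective f ∧ ∀ u v : V, G.Adj u v → col s(f u, f v) = c

/-- The `q`-color Ramsey number of a graph `G`. -/
noncomputable def ramseyMulti {V : Type*} (G : SimpleGraph V) (q : ℕ) : ℕ :=
  sInf {N | ∀ col : Sym2 (Fin N) → Fin q, ∃ c : Fin q, HasMonoCopyMulti G col c}

/-- The `n`-vertex graph consisting of a clique `K_k` together with `n - k` isolated vertices. -/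
def Hgraph (k n : ℕ) : SimpleGraph (Fin n) where
  Adj u v := u ≠ v ∧ (u : ℕ) < k ∧ (v : ℕ) < k
  symm := ⟨by rintro u v ⟨h1, h2, h3⟩; exact ⟨h1.symm, h3, h2⟩⟩
  loopless := ⟨by rintro u ⟨h, -⟩; exact h rfl⟩

/-- The `(n+1)`-vertex graph obtained from `Hgraph k n` by adding an apex vertex (the vertex `n`)
adjacent to all other vertices. -/
def Ggraph (k n : ℕ) : SimpleGraph (Fin (n + 1)) where
  Adj u v := u ≠ v ∧ ((u : ℕ) = n ∨ (v : ℕ) = n ∨ ((u : ℕ) < k ∧ (v : ℕ) < k))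
  symm := ⟨by rintro u v ⟨h1, h2⟩; exact ⟨h1.symm, by tauto⟩⟩
  loopless := ⟨by rintro u ⟨h, -⟩; exact h rfl⟩

/-- The disjoint union of `n / k` copies of `K_k` (blocks of `k` consecutive vertices). -/
def Hgraph' (k n : ℕ) : SimpleGraph (Fin n) where
  Adj u v := u ≠ v ∧ (u : ℕ) / k = (v : ℕ) / k
  symm := ⟨by rintro u v ⟨h1, h2⟩; exact ⟨h1.symm, h2.symm⟩⟩
  loopless := ⟨by rintro u ⟨h, -⟩; exact h rfl⟩

/-- `G` is `d`-degenerate: every nonempty set of vertices contains a vertex with at most `d`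
neighbors inside the set. -/
def Degenerate {V : Type*} (G : SimpleGraph V) (d : ℕ) : Prop :=
  ∀ s : Set V, s.Nonempty → ∃ v ∈ s, {u ∈ s | G.Adj v u}.ncard ≤ d

/-- The degeneracy of `G`: the least `d` such that `G` is `d`-degenerate. -/
noncomputable def degeneracy {V : Type*} (G : SimpleGraph V) : ℕ :=
  sInf {d | Degenerate G d}

/-- The number of edges of `K_N` receiving color `c` under the coloring `col`. -/
noncomputable def colorEdgeCount {N : ℕ} (col : Sym2 (Fin N) → Bool) (c : Bool) : ℕ :=
  {e : Sym2 (Fin N) | ¬ e.IsDiag ∧ col e = c}.ncard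

/-- The set of vertices joined to `v` by an edge of color `c`. -/
def colorNbr {N : ℕ} (col : Sym2 (Fin N) → Bool) (c : Bool) (v : Fin N) : Finset (Fin N) :=
  Finset.univ.filter fun u => u ≠ v ∧ col s(v, u) = c


/-- length of filter + filter-not. -/
lemma list_filter_length_aux {α : Type*} (p : α → Bool) (l : List α) :
    (l.filter p).length + (l.filter (fun a => !(p a))).length = l.length := by
  induction l with
  | nil => simp
  | cons a l ih =>
    by_cases h : p a = true <;> simp [List.filter_cons, h, ← ih] <;> omega

/-- Greedy construction of a pairwise half-monochromatic list. -/
lemma greedy_list {M : ℕ} (col : Sym2 (Fin M) → Bool) :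
    ∀ (k : ℕ) (A : Finset (Fin M)), 2 ^ k ≤ A.card + 1 →
    ∃ l : List (Fin M × Bool), l.length = k ∧ (∀ p ∈ l, p.1 ∈ A) ∧
      l.Pairwise (fun p q => p.1 ≠ q.1 ∧ col s(p.1, q.1) = p.2) := by
  intro k
  induction k with
  | zero => exact fun A _ => ⟨[], rfl, by simp, List.Pairwise.nil⟩
  | succ k ih =>
    intro A hA
    classical
    have h2 : 2 ^ (k + 1) = 2 * 2 ^ k := by ring
    have hpow : 1 ≤ 2 ^ k := Nat.one_le_two_pow
    have hcard : 1 ≤ A.card := by omega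
    obtain ⟨v, hv⟩ := Finset.card_pos.mp hcard
    have hsum : ((A.erase v).filter (fun u => col s(v, u) = true)).card +
        ((A.erase v).filter (fun u => ¬ (col s(v, u) = true))).card = (A.erase v).card :=
      Finset.card_filter_add_card_filter_not _
    have herase : (A.erase v).card = A.card - 1 := Finset.card_erase_of_mem hv
    have hor : 2 ^ k ≤ ((A.erase v).filter (fun u => col s(v, u) = true)).card + 1 ∨
        2 ^ k ≤ ((A.erase v).filter (fun u => ¬ (col s(v, u) = true))).card + 1 := by
      omega
    have key : ∀ (B : Finset (Fin M)) (c : Bool), B ⊆ A.erase v →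
        (∀ u ∈ B, col s(v, u) = c) → 2 ^ k ≤ B.card + 1 →
        ∃ l : List (Fin M × Bool), l.length = k + 1 ∧ (∀ p ∈ l, p.1 ∈ A) ∧
          l.Pairwise (fun p q => p.1 ≠ q.1 ∧ col s(p.1, q.1) = p.2) := by
      intro B c hBsub hBcol hBcard
      obtain ⟨l, hlen, hmem, hpair⟩ := ih B hBcard
      refine ⟨(v, c) :: l, by simp [hlen], ?_, ?_⟩
      · intro p hp
        rcases List.mem_cons.mp hp with h | h
        · rw [h]; exact hv
        · exact Finset.mem_of_mem_erase (hBsub (hmem p h))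
      · refine List.pairwise_cons.mpr ⟨?_, hpair⟩
        intro q hq
        have hqB := hmem q hq
        have hqv : q.1 ≠ v := Finset.ne_of_mem_erase (hBsub hqB)
        exact ⟨fun h => hqv h.symm, hBcol q.1 hqB⟩
    rcases hor with h | h
    · exact key ((A.erase v).filter (fun u => col s(v, u) = true)) true (Finset.filter_subset _ _)
        (fun u hu => (Finset.mem_filter.mp hu).2) h
    · refine key ((A.erase v).filter (fun u => ¬ (col s(v, u) = true))) false (Finset.filter_subset _ _)
        (fun u hu => ?_) h
      have := (Finset.mem_filter.mp hu).2
      simpa using this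

/-- From a long list, a monochromatic clique. -/
lemma exists_mono_clique {M n : ℕ} (col : Sym2 (Fin M) → Bool) (h : 2 ^ (2 * n) ≤ M + 1) :
    ∃ c : Bool, ∃ g : Fin n → Fin M, Function.Injective g ∧
      ∀ i j : Fin n, i ≠ j → col s(g i, g j) = c := by
  classical
  obtain ⟨l, hlen, -, hpair⟩ := greedy_list col (2 * n) Finset.univ
    (by simpa [Finset.card_univ] using h)
  have hflen := list_filter_length_aux (fun p : Fin M × Bool => p.2) l
  have hor : n ≤ (l.filter (fun p => p.2)).length ∨
      n ≤ (l.filter (fun p => !p.2)).length := by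
    rw [hlen] at hflen; omega
  have key : ∀ (c : Bool) (l' : List (Fin M × Bool)), l'.Sublist l →
      (∀ p ∈ l', p.2 = c) → n ≤ l'.length →
      ∃ c : Bool, ∃ g : Fin n → Fin M, Function.Injective g ∧
        ∀ i j : Fin n, i ≠ j → col s(g i, g j) = c := by
    intro c l' hsub hcol hn
    have hpair' : l'.Pairwise (fun p q => p.1 ≠ q.1 ∧ col s(p.1, q.1) = p.2) :=
      hpair.sublist hsub
    rw [List.pairwise_iff_get] at hpair'
    refine ⟨c, fun i => (l'.get ⟨i, lt_of_lt_of_le i.2 hn⟩).1, ?_, ?_⟩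
    · intro i j hij
      rcases lt_trichotomy (i : ℕ) (j : ℕ) with h' | h' | h'
      · exact absurd hij (hpair' ⟨i, lt_of_lt_of_le i.2 hn⟩ ⟨j, lt_of_lt_of_le j.2 hn⟩ h').1
      · exact Fin.ext h'
      · exact absurd hij.symm
          (hpair' ⟨j, lt_of_lt_of_le j.2 hn⟩ ⟨i, lt_of_lt_of_le i.2 hn⟩ h').1
    · intro i j hij
      rcases lt_trichotomy (i : ℕ) (j : ℕ) with h' | h' | h'
      · have := hpair' ⟨i, lt_of_lt_of_le i.2 hn⟩ ⟨j, lt_of_lt_of_le j.2 hn⟩ (by exact h')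
        rw [this.2]; exact hcol _ (l'.get_mem _)
      · exact absurd (Fin.ext h') hij
      · have := hpair' ⟨j, lt_of_lt_of_le j.2 hn⟩ ⟨i, lt_of_lt_of_le i.2 hn⟩ (by exact h')
        rw [Sym2.eq_swap, this.2]; exact hcol _ (l'.get_mem _)
  rcases hor with h' | h'
  · exact key true (l.filter (fun p => p.2)) List.filter_sublist
      (fun p hp => by simpa using (List.mem_filter.mp hp).2) h'
  · exact key false (l.filter (fun p => !p.2)) List.filter_sublist
      (fun p hp => by simpa using (List.mem_filter.mp hp).2) h'


lemma card_filter_funs_le {α : Type*} [Fintype α] [DecidableEq α] (T : Finset α) (c : Bool) :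
    ((Finset.univ : Finset (α → Bool)).filter (fun g => ∀ e ∈ T, g e = c)).card * 2 ^ T.card
      ≤ 2 ^ Fintype.card α := by
  classical
  set F := (Finset.univ : Finset (α → Bool)).filter (fun g => ∀ e ∈ T, g e = c) with hF
  have hinj : Function.Injective
      (fun x : {g // g ∈ F} × ({e // e ∈ T} → Bool) =>
        (fun a => if ha : a ∈ T then x.2 ⟨a, ha⟩ else x.1.1 a : α → Bool)) := by
    rintro ⟨⟨g1, hg1⟩, h1⟩ ⟨⟨g2, hg2⟩, h2⟩ heq
    simp only [Prod.mk.injEq, Subtype.mk.injEq]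
    have hg1' := (Finset.mem_filter.mp hg1).2
    have hg2' := (Finset.mem_filter.mp hg2).2
    constructor
    · funext a
      by_cases ha : a ∈ T
      · rw [hg1' a ha, hg2' a ha]
      · have := congrFun heq a; simpa [ha] using this
    · funext e
      have := congrFun heq e.1; simpa [e.2] using this
  have hcard := Fintype.card_le_of_injective _ hinj
  simp only [Fintype.card_prod, Fintype.card_coe, Fintype.card_fun, Fintype.card_bool] at hcard
  simpa [hF] using hcard

lemma descFactorial_le_pow (N : ℕ) : ∀ m, 3 ≤ m → (N + 1).descFactorial m ≤ N ^ m := by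
  intro m hm
  induction m with
  | zero => omega
  | succ k ih =>
    rcases Nat.lt_or_ge k 3 with hk | hk
    · -- k + 1 = 3, i.e. k = 2
      have hk2 : k = 2 := by omega
      subst hk2
      have h1 : (N - 1) * (N + 1) ≤ N * N := by
        cases N with
        | zero => simp
        | succ n => simp only [Nat.succ_sub_one]; nlinarith
      calc (N + 1).descFactorial 3
          = (N - 1) * (N * ((N + 1) * 1)) := by
            simp [Nat.descFactorial_succ, Nat.descFactorial_zero]
        _ = ((N - 1) * (N + 1)) * N := by ring
        _ ≤ (N * N) * N := Nat.mul_le_mul_right _ h1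
        _ = N ^ 3 := by ring
    · have h1 : (N + 1).descFactorial (k + 1) = (N + 1 - k) * (N + 1).descFactorial k :=
        Nat.descFactorial_succ _ _
      have h2 : N + 1 - k ≤ N := by omega
      calc (N + 1).descFactorial (k + 1)
          = (N + 1 - k) * (N + 1).descFactorial k := h1
        _ ≤ N * N ^ k := Nat.mul_le_mul h2 (ih hk)
        _ = N ^ (k + 1) := by ring

theorem ramsey_ge_of_degeneracy {V : Type*} [Fintype V] (G : SimpleGraph V) (d : ℕ)
    (hd : degeneracy G = d) (hd1 : 1 ≤ d) :
    (2 : ℝ) ^ ((d : ℝ) / 2) ≤ ramsey G := by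
  classical
  -- Step 1: extract a subgraph of minimum degree at least d
  have hnotdeg : ¬ Degenerate G (d - 1) := by
    intro hcon
    have hle : degeneracy G ≤ d - 1 := Nat.sInf_le hcon
    omega
  rw [Degenerate] at hnotdeg
  push_neg at hnotdeg
  obtain ⟨s, hs_ne, hs_deg⟩ := hnotdeg
  set S : Finset V := (Set.toFinite s).toFinset with hSdef
  have hmemS : ∀ v, v ∈ S ↔ v ∈ s := fun v => Set.Finite.mem_toFinset _
  have hdegS : ∀ v ∈ S, d ≤ (S.filter (fun u => G.Adj v u)).card := by
    intro v hv
    have h1 := hs_deg v ((hmemS v).mp hv)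
    have h2 : {u ∈ s | G.Adj v u} = ↑(S.filter (fun u => G.Adj v u)) := by
      ext u
      simp [hmemS, Set.mem_sep_iff]
    rw [h2, Set.ncard_coe_finset] at h1
    omega
  set m := S.card with hmdef
  obtain ⟨v₀, hv₀⟩ : S.Nonempty := ⟨hs_ne.choose, (hmemS _).mpr hs_ne.choose_spec⟩
  have hm : d + 1 ≤ m := by
    have h1 := hdegS v₀ hv₀
    have h2 : (S.filter (fun u => G.Adj v₀ u)) ⊆ S.erase v₀ := by
      intro u hu
      rw [Finset.mem_erase]
      refine ⟨fun h => G.loopless.irrefl v₀ ?_, (Finset.mem_filter.mp hu).1⟩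
      have := (Finset.mem_filter.mp hu).2
      rwa [h] at this
    have h3 := Finset.card_le_card h2
    have h4 : (S.erase v₀).card = m - 1 := Finset.card_erase_of_mem hv₀
    have h5 : 1 ≤ m := Finset.card_pos.mpr ⟨v₀, hv₀⟩
    omega
  -- Step 2: every N in the Ramsey set satisfies 2^d ≤ N^2
  have main : ∀ N ∈ {N | ∀ col : Sym2 (Fin N) → Bool, ∃ c : Bool, HasMonoCopy G col c},
      2 ^ d ≤ N ^ 2 := by
    intro N hN
    simp only [Set.mem_setOf_eq] at hN
    by_contra hlt
    push_neg at hlt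
    -- m ≤ N
    have hmN : m ≤ N := by
      obtain ⟨c, hc⟩ := hN (fun _ => true)
      have hc' : ∃ f : V → Fin N, Function.Injective f ∧
          ∀ u v : V, G.Adj u v → (fun _ => true) s(f u, f v) = c := hc
      obtain ⟨f, hfinj, -⟩ := hc'
      calc m ≤ Fintype.card V := by
              rw [← Finset.card_univ]; exact Finset.card_le_card (Finset.subset_univ S)
        _ ≤ Fintype.card (Fin N) := Fintype.card_le_of_injective f hfinj
        _ = N := Fintype.card_fin N
    have hm3 : 3 ≤ m := by
      rcases Nat.lt_or_ge d 2 with h | h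
      · exfalso
        have hd1' : d = 1 := by omega
        have hN2 : 2 ≤ N := by omega
        have : 4 ≤ N ^ 2 := by nlinarith
        rw [hd1'] at hlt
        norm_num at hlt
        omega
      · omega
    -- the vertex subtype
    have hσcard : Fintype.card {x // x ∈ S} = m := Fintype.card_coe S
    -- ordered adjacency pairs
    obtain ⟨P', hP'def⟩ : ∃ P' : Finset ({x // x ∈ S} × {x // x ∈ S}),
      Finset.univ.filter (fun p => G.Adj ↑p.1 ↑p.2) = P' := ⟨_, rfl⟩
    have hP'card : m * d ≤ P'.card := by
      have h1 : P'.card = ∑ x : {x // x ∈ S},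
          (Finset.univ.filter (fun y : {x // x ∈ S} => G.Adj ↑x ↑y)).card := by
        rw [← hP'def]
        rw [Finset.card_filter]
        rw [Fintype.sum_prod_type]
        congr 1
        funext x
        rw [Finset.card_filter]
      rw [h1]
      have h2 : ∀ x : {x // x ∈ S},
          d ≤ (Finset.univ.filter (fun y : {x // x ∈ S} => G.Adj ↑x ↑y)).card := by
        intro x
        have h3 : (Finset.univ.filter (fun y : {x // x ∈ S} => G.Adj ↑x ↑y)).card
            = (S.filter (fun u => G.Adj ↑x u)).card := by
          refine Finset.card_bij (fun y _ => (y : V)) ?_ ?_ ?_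
          · intro y hy
            rw [Finset.mem_filter]
            exact ⟨y.2, (Finset.mem_filter.mp hy).2⟩
          · intro y _ y' _ h
            exact Subtype.ext h
          · intro b hb
            exact ⟨⟨b, (Finset.mem_filter.mp hb).1⟩, by
              simp [(Finset.mem_filter.mp hb).2], rfl⟩
        rw [h3]
        exact hdegS ↑x x.2
      calc m * d = ∑ _x : {x // x ∈ S}, d := by
              rw [Finset.sum_const, Finset.card_univ, hσcard, smul_eq_mul]
        _ ≤ _ := Finset.sum_le_sum (fun x _ => h2 x)
    -- edge images
    obtain ⟨T, hTdef⟩ : ∃ T : ({x // x ∈ S} ↪ Fin (N + 1)) → Finset (Sym2 (Fin (N + 1))),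
      T = fun f => P'.image (fun p => s(f p.1, f p.2)) := ⟨_, rfl⟩
    have hT : ∀ f : {x // x ∈ S} ↪ Fin (N + 1), m * d ≤ 2 * (T f).card := by
      intro f
      rw [hTdef]
      refine le_trans hP'card ?_
      apply Finset.card_le_mul_card_image
      intro b hb
      obtain ⟨q, hq, hqb⟩ := Finset.mem_image.mp hb
      have hsub : P'.filter (fun p => s(f p.1, f p.2) = b) ⊆ {q, (q.2, q.1)} := by
        intro p hp
        obtain ⟨hpP, hpb⟩ := Finset.mem_filter.mp hp
        rw [← hqb, Sym2.eq_iff] at hpb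
        rcases hpb with ⟨h1, h2⟩ | ⟨h1, h2⟩
        · have : p = q := Prod.ext (f.injective h1) (f.injective h2)
          simp [this]
        · have : p = (q.2, q.1) := Prod.ext (f.injective h1) (f.injective h2)
          simp [this]
      calc (P'.filter (fun p => s(f p.1, f p.2) = b)).card
          ≤ ({q, (q.2, q.1)} : Finset _).card := Finset.card_le_card hsub
        _ ≤ 2 := by
            refine le_trans (Finset.card_insert_le _ _) ?_
            simp
    -- number of colorings fixing the image edges
    obtain ⟨K, hKdef⟩ : ∃ K, Fintype.card (Sym2 (Fin (N + 1))) = K := ⟨_, rfl⟩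
    obtain ⟨Cols, hColsdef⟩ : ∃ Cols : ({x // x ∈ S} ↪ Fin (N + 1)) → Bool →
        Finset (Sym2 (Fin (N + 1)) → Bool),
      Cols = fun f c => (Finset.univ : Finset (Sym2 (Fin (N + 1)) → Bool)).filter
        (fun col => ∀ e ∈ T f, col e = c) := ⟨_, rfl⟩
    obtain ⟨D, hDdef⟩ : ∃ D, Nat.descFactorial (N + 1) m = D := ⟨_, rfl⟩
    have hDemb : Fintype.card ({x // x ∈ S} ↪ Fin (N + 1)) = D := by
      rw [Fintype.card_embedding_eq, Fintype.card_fin, hσcard, hDdef]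
    have hDpos : 0 < D := by
      rcases Nat.eq_zero_or_pos D with h | h
      · exfalso
        have := Nat.descFactorial_eq_zero_iff_lt.mp (hDdef.trans h)
        omega
      · exact h
    -- per-pair bound : D * (Cols f c).card < 2^K
    have hper : ∀ (f : {x // x ∈ S} ↪ Fin (N + 1)) (c : Bool),
        D * (Cols f c).card + 1 ≤ 2 ^ K := by
      intro f c
      have h1 : (Cols f c).card * 2 ^ (T f).card ≤ 2 ^ K := by
        rw [← hKdef, hColsdef]; exact card_filter_funs_le (T f) c
      rcases Nat.eq_zero_or_pos (Cols f c).card with h0 | hpos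
      · rw [h0, Nat.mul_zero]
        exact Nat.one_le_two_pow
      · have h2 : N ^ m * (Cols f c).card < 2 ^ K := by
          have h3 : (N ^ m * (Cols f c).card) ^ 2 < (2 ^ K) ^ 2 := by
            have h4 : (N ^ m * (Cols f c).card) ^ 2
                = (N ^ 2) ^ m * ((Cols f c).card) ^ 2 := by ring
            have h5 : (N ^ 2) ^ m < (2 ^ d) ^ m :=
              Nat.pow_lt_pow_left hlt (by omega)
            have h6 : (2 ^ d) ^ m ≤ 2 ^ (2 * (T f).card) := by
              rw [← Nat.pow_mul]
              refine Nat.pow_le_pow_right (by omega) ?_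
              have h6a := hT f
              calc d * m = m * d := Nat.mul_comm d m
                _ ≤ 2 * (T f).card := h6a
            calc (N ^ m * (Cols f c).card) ^ 2
                = (N ^ 2) ^ m * ((Cols f c).card) ^ 2 := h4
              _ < (2 ^ d) ^ m * ((Cols f c).card) ^ 2 := by
                  exact mul_lt_mul_of_pos_right h5 (pow_pos hpos 2)
              _ ≤ 2 ^ (2 * (T f).card) * ((Cols f c).card) ^ 2 :=
                  Nat.mul_le_mul_right _ h6
              _ = ((Cols f c).card * 2 ^ (T f).card) ^ 2 := by ring
              _ ≤ (2 ^ K) ^ 2 := Nat.pow_le_pow_left h1 2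
          exact lt_of_pow_lt_pow_left₀ 2 (Nat.zero_le _) h3
        have h7 : D ≤ N ^ m := by
          rw [← hDdef]
          exact descFactorial_le_pow N m hm3
        have h8 : D * (Cols f c).card ≤ N ^ m * (Cols f c).card :=
          Nat.mul_le_mul_right _ h7
        omega
    -- double counting and pigeonhole: some coloring has at most one monochromatic pair
    obtain ⟨col₀, hcol₀⟩ : ∃ col₀ : Sym2 (Fin (N + 1)) → Bool,
        ((Finset.univ : Finset (({x // x ∈ S} ↪ Fin (N + 1)) × Bool)).filter
          (fun p => ∀ e ∈ T p.1, col₀ e = p.2)).card ≤ 1 := by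
      by_contra hcon
      push_neg at hcon
      have hswap : ∑ col : Sym2 (Fin (N + 1)) → Bool,
          ((Finset.univ : Finset (({x // x ∈ S} ↪ Fin (N + 1)) × Bool)).filter
            (fun p => ∀ e ∈ T p.1, col e = p.2)).card
          = ∑ p : ({x // x ∈ S} ↪ Fin (N + 1)) × Bool, (Cols p.1 p.2).card := by
        simp only [Finset.card_filter, hColsdef]
        exact Finset.sum_comm
      have hlow : 2 ^ K * 2 ≤ ∑ col : Sym2 (Fin (N + 1)) → Bool,
          ((Finset.univ : Finset (({x // x ∈ S} ↪ Fin (N + 1)) × Bool)).filter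
            (fun p => ∀ e ∈ T p.1, col e = p.2)).card := by
        have : ∀ col : Sym2 (Fin (N + 1)) → Bool, 2 ≤
            ((Finset.univ : Finset (({x // x ∈ S} ↪ Fin (N + 1)) × Bool)).filter
              (fun p => ∀ e ∈ T p.1, col e = p.2)).card := fun col => hcon col
        calc 2 ^ K * 2 = ∑ _col : Sym2 (Fin (N + 1)) → Bool, 2 := by
              rw [Finset.sum_const, Finset.card_univ, Fintype.card_fun,
                Fintype.card_bool, smul_eq_mul, hKdef]
          _ ≤ _ := Finset.sum_le_sum (fun col _ => this col)
      have hup : D * ∑ p : ({x // x ∈ S} ↪ Fin (N + 1)) × Bool, (Cols p.1 p.2).card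
          + 2 * D ≤ 2 * D * 2 ^ K := by
        have h1 : ∀ p : ({x // x ∈ S} ↪ Fin (N + 1)) × Bool,
            D * (Cols p.1 p.2).card + 1 ≤ 2 ^ K := fun p => hper p.1 p.2
        have h2 : ∑ p : ({x // x ∈ S} ↪ Fin (N + 1)) × Bool, (D * (Cols p.1 p.2).card + 1)
            ≤ ∑ _p : ({x // x ∈ S} ↪ Fin (N + 1)) × Bool, 2 ^ K :=
          Finset.sum_le_sum (fun p _ => h1 p)
        have h3 : Fintype.card (({x // x ∈ S} ↪ Fin (N + 1)) × Bool) = D * 2 := by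
          rw [Fintype.card_prod, Fintype.card_bool, hDemb]
        rw [Finset.sum_add_distrib, ← Finset.mul_sum, Finset.sum_const,
          Finset.sum_const, Finset.card_univ, h3, smul_eq_mul, smul_eq_mul] at h2
        calc D * ∑ p : ({x // x ∈ S} ↪ Fin (N + 1)) × Bool, (Cols p.1 p.2).card + 2 * D
            = D * ∑ p : ({x // x ∈ S} ↪ Fin (N + 1)) × Bool, (Cols p.1 p.2).card
              + D * 2 * 1 := by ring
          _ ≤ D * 2 * 2 ^ K := h2
          _ = 2 * D * 2 ^ K := by ring
      have hlow2 : D * (2 ^ K * 2) ≤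
          D * ∑ p : ({x // x ∈ S} ↪ Fin (N + 1)) × Bool, (Cols p.1 p.2).card := by
        rw [← hswap]
        exact Nat.mul_le_mul_left D hlow
      have heq : D * (2 ^ K * 2) = 2 * D * 2 ^ K := by
        rw [Nat.mul_comm (2 ^ K) 2, ← Nat.mul_assoc, Nat.mul_comm D 2]
      rw [heq] at hlow2
      have h9 : 2 * D * 2 ^ K + 2 * D ≤ 2 * D * 2 ^ K + 0 := by
        rw [Nat.add_zero]
        exact le_trans (Nat.add_le_add_right hlow2 _) hup
      have h10 : 2 * D ≤ 0 := Nat.le_of_add_le_add_left h9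
      rcases Nat.mul_eq_zero.mp (Nat.le_zero.mp h10) with h | h
      · exact absurd h (by norm_num)
      · rw [h] at hDpos
        exact Nat.lt_irrefl 0 hDpos
    -- extract a good coloring of K_N from col₀
    have hkey : ∀ (ι : Fin N → Fin (N + 1)), Function.Injective ι →
        ∃ p : ({x // x ∈ S} ↪ Fin (N + 1)) × Bool,
          p ∈ (Finset.univ : Finset (({x // x ∈ S} ↪ Fin (N + 1)) × Bool)).filter
            (fun p => ∀ e ∈ T p.1, col₀ e = p.2) ∧
          (∀ x : {x // x ∈ S}, p.1 x ∈ Set.range ι) := by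
      intro ι hι
      obtain ⟨c, hc⟩ := hN (fun e => col₀ (Sym2.map ι e))
      have hc' : ∃ g : V → Fin N, Function.Injective g ∧
          ∀ u v : V, G.Adj u v → col₀ (Sym2.map ι s(g u, g v)) = c := hc
      obtain ⟨g, hginj, hmono⟩ := hc'
      refine ⟨⟨⟨fun x => ι (g ↑x), ?_⟩, c⟩, ?_, ?_⟩
      · intro x y hxy
        exact Subtype.ext (hginj (hι hxy))
      · rw [Finset.mem_filter]
        refine ⟨Finset.mem_univ _, ?_⟩
        intro e he
        rw [hTdef] at he
        obtain ⟨q, hq, hqe⟩ := Finset.mem_image.mp he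
        rw [← hP'def] at hq
        have hadj : G.Adj ↑q.1 ↑q.2 := (Finset.mem_filter.mp hq).2
        have := hmono ↑q.1 ↑q.2 hadj
        rw [Sym2.map_pair_eq] at this
        rw [← hqe]
        exact this
      · intro x
        exact ⟨g ↑x, rfl⟩
    rcases Nat.le_one_iff_eq_zero_or_eq_one.mp hcol₀ with hX | hX
    · obtain ⟨p, hp, -⟩ := hkey (Fin.castSucc) (Fin.castSucc_injective N)
      have : 0 < ((Finset.univ : Finset (({x // x ∈ S} ↪ Fin (N + 1)) × Bool)).filter
          (fun p => ∀ e ∈ T p.1, col₀ e = p.2)).card := Finset.card_pos.mpr ⟨p, hp⟩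
      omega
    · obtain ⟨p₀, hp₀⟩ := Finset.card_eq_one.mp hX
      set w : Fin (N + 1) := p₀.1 ⟨v₀, hv₀⟩ with hwdef
      obtain ⟨p, hp, hrange⟩ := hkey w.succAbove Fin.succAbove_right_injective
      have hpeq : p = p₀ := by
        rw [hp₀] at hp
        exact Finset.mem_singleton.mp hp
      obtain ⟨y, hy⟩ := hrange ⟨v₀, hv₀⟩
      rw [hpeq, ← hwdef] at hy
      exact Fin.succAbove_ne w y hy
  -- Step 3: conclude
  have hne : Set.Nonempty {N | ∀ col : Sym2 (Fin N) → Bool, ∃ c : Bool, HasMonoCopy G col c} := by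
    refine ⟨2 ^ (2 * Fintype.card V), ?_⟩
    intro col
    obtain ⟨c, g, hginj, hmono⟩ := exists_mono_clique col (Nat.le_succ _)
    have hcopy : ∃ f : V → Fin (2 ^ (2 * Fintype.card V)), Function.Injective f ∧
        ∀ u v : V, G.Adj u v → col s(f u, f v) = c := by
      refine ⟨g ∘ (Fintype.equivFin V), hginj.comp (Fintype.equivFin V).injective, ?_⟩
      intro u v huv
      exact hmono _ _ (fun h => G.ne_of_adj huv ((Fintype.equivFin V).injective h))
    exact ⟨c, hcopy⟩
  have hmem := Nat.sInf_mem hne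
  have hbound := main _ hmem
  unfold ramsey
  set R : ℕ := sInf {N | ∀ col : Sym2 (Fin N) → Bool, ∃ c : Bool, HasMonoCopy G col c} with hR
  have hR2 : ((2 : ℝ) ^ d : ℝ) ≤ (R : ℝ) ^ 2 := by exact_mod_cast hbound
  have ha : ((2 : ℝ) ^ ((d : ℝ) / 2)) ^ 2 = (2 : ℝ) ^ d := by
    rw [← Real.rpow_natCast ((2 : ℝ) ^ ((d : ℝ) / 2)) 2,
      ← Real.rpow_mul (by norm_num : (0 : ℝ) ≤ 2)]
    rw [show (d : ℝ) / 2 * ((2 : ℕ) : ℝ) = ((d : ℕ) : ℝ) by push_cast; ring]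
    exact Real.rpow_natCast 2 d
  nlinarith [Real.rpow_nonneg (by norm_num : (0 : ℝ) ≤ 2) ((d : ℝ) / 2),
    Nat.cast_nonneg (α := ℝ) R, ha, hR2]
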